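/- Let b : ℝ → ℝ be bounded, measurable and Lebesgue integrable, define φ(x) = ∫_0^x exp(−2 ∫_0^y b(z) dz) dy and φ'(x) = exp(−2 ∫_0^x b(z) dz), and let a : ℝ → ℝ be bounded and twice continuously differentiable with bounded first and second derivatives. Then the maps φ' ∘ φ⁻¹ : ℝ → ℝ and (φ'·a) ∘ φ⁻¹ : ℝ → ℝ are globally Lipschitz continuous, where φ⁻¹ denotes the inverse of the bijection φ. -/
import Mathlib


open MeasureTheory intervalIntegral

noncomputable section

/-- `φ'(x) = exp(−2 ∫_0^x b(z) dz)`. -/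
def phi' (b : ℝ → ℝ) (x : ℝ) : ℝ := Real.exp (-2 * ∫ z in (0:ℝ)..x, b z)

/-- `φ(x) = ∫_0^x exp(−2 ∫_0^y b(z) dz) dy`. -/
def phi (b : ℝ → ℝ) (x : ℝ) : ℝ := ∫ y in (0:ℝ)..x, phi' b y

lemma exp_sub_exp_le {K s t : ℝ} (hs : s ≤ K) (ht : t ≤ K) :
    |Real.exp s - Real.exp t| ≤ Real.exp K * |s - t| := by
  wlog h : t ≤ s generalizing s t
  · rw [abs_sub_comm, abs_sub_comm s t]; exact this ht hs (le_of_not_ge h)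
  have h1 : Real.exp t ≤ Real.exp s := Real.exp_le_exp.2 h
  rw [abs_of_nonneg (by linarith), abs_of_nonneg (by linarith)]
  have hu : Real.exp (s - t) - 1 ≤ (s - t) * Real.exp (s - t) := by
    have h2 := Real.add_one_le_exp (-(s - t))
    have h3 := Real.exp_pos (s - t)
    have h4 : Real.exp (-(s - t)) * Real.exp (s - t) = 1 := by
      rw [← Real.exp_add]; simp
    nlinarith
  have he : Real.exp t * Real.exp (s - t) = Real.exp s := by
    rw [← Real.exp_add]; ring_nf
  have hK : Real.exp s ≤ Real.exp K := Real.exp_le_exp.2 hs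
  have h3 := Real.exp_pos t
  nlinarith

theorem statement3 (b : ℝ → ℝ) (hmeas : Measurable b)
    (hint : Integrable b (volume : Measure ℝ))
    (hbd : ∃ C : ℝ, ∀ x, |b x| ≤ C)
    (a : ℝ → ℝ) (ha : ContDiff ℝ 2 a)
    (hab : ∃ C : ℝ, ∀ x, |a x| ≤ C)
    (hab' : ∃ C : ℝ, ∀ x, |deriv a x| ≤ C)
    (hab'' : ∃ C : ℝ, ∀ x, |deriv (deriv a) x| ≤ C) :
    (∃ L₁ : NNReal, LipschitzWith L₁ (phi' b ∘ Function.invFun (phi b))) ∧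
    (∃ L₂ : NNReal, LipschitzWith L₂ ((fun x => phi' b x * a x) ∘ Function.invFun (phi b))) := by
  obtain ⟨C, hC⟩ := hbd
  have hC0 : 0 ≤ C := le_trans (abs_nonneg _) (hC 0)
  set M : ℝ := ∫ z, |b z| with hM
  have hbii : ∀ u v : ℝ, IntervalIntegrable b volume u v := fun u v =>
    hint.intervalIntegrable
  -- F x = ∫_0^x b
  set F : ℝ → ℝ := fun x => ∫ z in (0:ℝ)..x, b z with hFdef
  have hFbd : ∀ x, |F x| ≤ M := by
    intro x
    calc |F x| ≤ ∫ z in Set.uIoc 0 x, |b z| := by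
          simpa using intervalIntegral.norm_integral_le_integral_norm_uIoc
            (f := b) (a := 0) (b := x) (μ := volume)
      _ ≤ M := setIntegral_le_integral hint.abs
          (Filter.Eventually.of_forall fun z => abs_nonneg _)
  have hFlip : ∀ x y, |F x - F y| ≤ C * |x - y| := by
    intro x y
    have : F x - F y = ∫ z in y..x, b z :=
      intervalIntegral.integral_interval_sub_left (hbii 0 x) (hbii 0 y)
    rw [this]
    simpa using intervalIntegral.norm_integral_le_of_norm_le_const
      (C := C) (a := y) (b := x) (f := b) (fun z _ => hC z)
  have hFcont : Continuous F :=
    intervalIntegral.continuous_primitive hbii 0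
  have hphi'cont : Continuous (phi' b) := by
    unfold phi'
    exact Real.continuous_exp.comp (continuous_const.mul hFcont)
  have hMnonneg : 0 ≤ M := integral_nonneg fun z => abs_nonneg _
  have hphi'le : ∀ x, phi' b x ≤ Real.exp (2 * M) := by
    intro x
    apply Real.exp_le_exp.2
    have := (abs_le.1 (hFbd x)).1
    linarith
  have hphi'ge : ∀ x, Real.exp (-(2 * M)) ≤ phi' b x := by
    intro x
    apply Real.exp_le_exp.2
    have := (abs_le.1 (hFbd x)).2
    linarith
  set c : ℝ := Real.exp (-(2 * M)) with hc
  have hcpos : 0 < c := Real.exp_pos _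
  -- Lipschitz of phi'
  have hphi'lip : ∀ x y, |phi' b x - phi' b y| ≤ (Real.exp (2 * M) * (2 * C)) * |x - y| := by
    intro x y
    have h1 : |phi' b x - phi' b y| ≤ Real.exp (2 * M) * |(-2 * F x) - (-2 * F y)| := by
      apply exp_sub_exp_le
      · have := (abs_le.1 (hFbd x)).1; linarith
      · have := (abs_le.1 (hFbd y)).1; linarith
    have h2 : |(-2 * F x) - (-2 * F y)| = 2 * |F x - F y| := by
      rw [show (-2 * F x) - (-2 * F y) = -(2 * (F x - F y)) by ring, abs_neg, abs_mul]
      norm_num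
    have h3 := hFlip x y
    calc |phi' b x - phi' b y| ≤ Real.exp (2 * M) * (2 * |F x - F y|) := by rw [← h2]; exact h1
      _ ≤ (Real.exp (2 * M) * (2 * C)) * |x - y| := by nlinarith [Real.exp_pos (2*M), abs_nonneg (x - y)]
  -- growth of phi
  have hphiint : ∀ u v : ℝ, IntervalIntegrable (phi' b) volume u v := fun u v =>
    hphi'cont.intervalIntegrable u v
  have hgrow : ∀ x y : ℝ, x ≤ y → c * (y - x) ≤ phi b y - phi b x := by
    intro x y hxy
    have hdiff : phi b y - phi b x = ∫ t in x..y, phi' b t :=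
      intervalIntegral.integral_interval_sub_left (hphiint 0 y) (hphiint 0 x)
    rw [hdiff]
    have : c * (y - x) = ∫ _t in x..y, c := by
      rw [intervalIntegral.integral_const, smul_eq_mul]; ring
    rw [this]
    apply intervalIntegral.integral_mono_on hxy (intervalIntegrable_const) (hphiint x y)
    intro t _
    exact hphi'ge t
  have hphicont : Continuous (phi b) :=
    intervalIntegral.continuous_primitive hphiint 0
  have hphi0 : phi b 0 = 0 := intervalIntegral.integral_same
  have hsurj : Function.Surjective (phi b) := by
    apply hphicont.surjective
    · apply Filter.tendsto_atTop_mono' _ _ (Filter.Tendsto.const_mul_atTop hcpos Filter.tendsto_id)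
      filter_upwards [Filter.eventually_ge_atTop (0:ℝ)] with x hx
      have := hgrow 0 x hx
      simp only [hphi0] at this
      simpa using this.trans_eq' (by ring)
    · apply Filter.tendsto_atBot_mono' _ _ (Filter.Tendsto.const_mul_atBot hcpos Filter.tendsto_id)
      filter_upwards [Filter.eventually_le_atBot (0:ℝ)] with x hx
      have := hgrow x 0 hx
      simp only [hphi0] at this
      simp only [id_eq]
      linarith
  -- inverse Lipschitz
  have hlow : ∀ x y : ℝ, dist x y ≤ c⁻¹ * dist (phi b x) (phi b y) := by
    have key : ∀ x y : ℝ, x ≤ y → dist x y ≤ c⁻¹ * dist (phi b x) (phi b y) := by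
      intro x y hxy
      have h1 := hgrow x y hxy
      rw [Real.dist_eq, Real.dist_eq, abs_sub_comm x y, abs_sub_comm (phi b x) (phi b y),
        abs_of_nonneg (by linarith : (0:ℝ) ≤ y - x),
        abs_of_nonneg (by nlinarith : (0:ℝ) ≤ phi b y - phi b x)]
      rw [← sub_nonneg]
      have : c⁻¹ * (phi b y - phi b x) - (y - x) = c⁻¹ * ((phi b y - phi b x) - c * (y - x)) := by
        field_simp
      rw [this]
      exact mul_nonneg (by positivity) (by linarith)
    intro x y
    rcases le_total x y with h | h
    · exact key x y h
    · rw [dist_comm, dist_comm (phi b x)]; exact key y x h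
  have hinvlip : ∀ u v : ℝ, dist (Function.invFun (phi b) u) (Function.invFun (phi b) v)
      ≤ c⁻¹ * dist u v := by
    intro u v
    have hu : phi b (Function.invFun (phi b) u) = u := Function.rightInverse_invFun hsurj u
    have hv : phi b (Function.invFun (phi b) v) = v := Function.rightInverse_invFun hsurj v
    have := hlow (Function.invFun (phi b) u) (Function.invFun (phi b) v)
    rwa [hu, hv] at this
  -- constants
  obtain ⟨Ca, hCa⟩ := hab
  have hCa0 : 0 ≤ Ca := le_trans (abs_nonneg _) (hCa 0)
  obtain ⟨Ca', hCa'⟩ := hab'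
  have hCa'0 : 0 ≤ Ca' := le_trans (abs_nonneg _) (hCa' 0)
  have halip : ∀ x y, |a x - a y| ≤ Ca' * |x - y| := by
    intro x y
    have h := lipschitzWith_of_nnnorm_deriv_le (C := Ca'.toNNReal)
      (ha.differentiable (by norm_num)) (fun x => by
        rw [← NNReal.coe_le_coe]
        simpa [Real.coe_toNNReal _ hCa'0] using hCa' x)
    have := h.dist_le_mul x y
    rw [Real.dist_eq, Real.dist_eq] at this
    simpa [Real.coe_toNNReal _ hCa'0] using this
  -- Lipschitz constants as reals; then convert
  have mk : ∀ (K : ℝ) (f : ℝ → ℝ), 0 ≤ K → (∀ x y, dist (f x) (f y) ≤ K * dist x y) →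
      ∃ L : NNReal, LipschitzWith L f := by
    intro K f hK h
    exact ⟨K.toNNReal, LipschitzWith.of_dist_le_mul fun x y => by
      simpa [Real.coe_toNNReal _ hK] using h x y⟩
  constructor
  · apply mk ((Real.exp (2 * M) * (2 * C)) * c⁻¹) _ (by positivity)
    intro u v
    simp only [Function.comp_apply]
    rw [Real.dist_eq]
    calc |phi' b (Function.invFun (phi b) u) - phi' b (Function.invFun (phi b) v)|
        ≤ (Real.exp (2 * M) * (2 * C)) * dist (Function.invFun (phi b) u) (Function.invFun (phi b) v) := by
          rw [Real.dist_eq]; exact hphi'lip _ _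
      _ ≤ (Real.exp (2 * M) * (2 * C)) * (c⁻¹ * dist u v) := by
          apply mul_le_mul_of_nonneg_left (hinvlip u v) (by positivity)
      _ = ((Real.exp (2 * M) * (2 * C)) * c⁻¹) * dist u v := by ring
  · -- product Lipschitz constant
    set Kp : ℝ := Real.exp (2 * M) * Ca' + Ca * (Real.exp (2 * M) * (2 * C)) with hKp
    have hKp0 : 0 ≤ Kp := by positivity
    have hprod : ∀ x y, |phi' b x * a x - phi' b y * a y| ≤ Kp * |x - y| := by
      intro x y
      have h1 : phi' b x * a x - phi' b y * a y
          = phi' b x * (a x - a y) + a y * (phi' b x - phi' b y) := by ring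
      have h2 : |phi' b x * a x - phi' b y * a y|
          ≤ |phi' b x| * |a x - a y| + |a y| * |phi' b x - phi' b y| := by
        rw [h1]
        exact le_trans (abs_add_le _ _) (by rw [abs_mul, abs_mul])
      have h3 : |phi' b x| ≤ Real.exp (2 * M) := by
        have hpos : 0 < phi' b x := Real.exp_pos _
        rw [abs_of_pos hpos]; exact hphi'le x
      have h4 := halip x y
      have h5 := hphi'lip x y
      have h6 := hCa y
      nlinarith [abs_nonneg (a x - a y), abs_nonneg (phi' b x - phi' b y), abs_nonneg (x - y),
        abs_nonneg (phi' b x), abs_nonneg (a y), Real.exp_pos (2*M)]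
    apply mk (Kp * c⁻¹) _ (by positivity)
    intro u v
    simp only [Function.comp_apply]
    rw [Real.dist_eq]
    calc |phi' b (Function.invFun (phi b) u) * a (Function.invFun (phi b) u)
          - phi' b (Function.invFun (phi b) v) * a (Function.invFun (phi b) v)|
        ≤ Kp * dist (Function.invFun (phi b) u) (Function.invFun (phi b) v) := by
          rw [Real.dist_eq]; exact hprod _ _
      _ ≤ Kp * (c⁻¹ * dist u v) := mul_le_mul_of_nonneg_left (hinvlip u v) hKp0
      _ = (Kp * c⁻¹) * dist u v := by ring
end
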